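/- Let Ġ = (G,σ) be a 𝒦₄⁻-free unbalanced signed graph of order n ≥ 7. Then the number of edges satisfies e(Ġ) ≤ n(n-1)/2 - (n-3). -/

import Mathlib

open Matrix

/-- The product of the edge signs along a walk in a signed graph. -/
def walkSign {V : Type*} {G : SimpleGraph V} (σ : V → V → ℝ) {u v : V} (w : G.Walk u v) : ℝ :=
  (w.darts.map fun d => σ d.toProd.1 d.toProd.2).prod

/-- A signed graph is unbalanced if some cycle has edge-sign product `-1`. -/
def IsUnbalanced {V : Type*} (G : SimpleGraph V) (σ : V → V → ℝ) : Prop :=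
  ∃ (v : V) (w : G.Walk v v), w.IsCycle ∧ walkSign σ w = -1

/-- A signed graph is `𝒦₄⁻`-free if every 4-clique induces a balanced signed `K₄`,
i.e. every triangle contained in a 4-clique has positive sign. -/
def K4MinusFree {V : Type*} (G : SimpleGraph V) (σ : V → V → ℝ) : Prop :=
  ∀ a b c d : V, G.Adj a b → G.Adj a c → G.Adj a d → G.Adj b c → G.Adj b d → G.Adj c d →
    σ a b * σ b c * σ c a = 1 ∧ σ a b * σ b d * σ d a = 1 ∧
    σ a c * σ c d * σ d a = 1 ∧ σ b c * σ c d * σ d b = 1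

namespace SignedAux

open SimpleGraph

variable {V : Type*} {G : SimpleGraph V} (σ : V → V → ℝ)

lemma walkSign_nil {u : V} : walkSign σ (Walk.nil : G.Walk u u) = 1 := rfl

lemma walkSign_cons {u v w : V} (h : G.Adj u v) (p : G.Walk v w) :
    walkSign σ (Walk.cons h p) = σ u v * walkSign σ p := by
  simp [walkSign]

lemma walkSign_append {u v w : V} (p : G.Walk u v) (q : G.Walk v w) :
    walkSign σ (p.append q) = walkSign σ p * walkSign σ q := by
  simp [walkSign, Walk.darts_append]

lemma walkSign_unit (hσ : ∀ u v, G.Adj u v → σ u v = 1 ∨ σ u v = -1) {u v : V}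
    (p : G.Walk u v) : walkSign σ p = 1 ∨ walkSign σ p = -1 := by
  induction p with
  | nil => left; rfl
  | cons h q ih =>
    rcases hσ _ _ h with h1 | h1 <;> rcases ih with h2 | h2 <;>
      simp [walkSign_cons, h1, h2]

lemma neg_mem_of_prod_neg : ∀ (l : List ℝ), (∀ x ∈ l, x = 1 ∨ x = -1) →
    l.prod = -1 → ∃ x ∈ l, x = -1 := by
  intro l
  induction l with
  | nil => intro _ hp; norm_num at hp
  | cons a l ih =>
    intro h hp
    rcases h a (by simp) with rfl | rfl
    · rw [List.prod_cons, one_mul] at hp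
      obtain ⟨x, hx, hx2⟩ := ih (fun x hx => h x (by simp [hx])) hp
      exact ⟨x, by simp [hx], hx2⟩
    · exact ⟨-1, by simp, rfl⟩

lemma tri_prod (hσsymm : ∀ u v, σ u v = σ v u)
    (hσsign : ∀ u v, G.Adj u v → σ u v = 1 ∨ σ u v = -1) {x : V} :
    ∀ {u v : V} (p : G.Walk u v), (∀ y ∈ p.support, G.Adj x y) →
    ((p.darts.map fun d => σ x d.toProd.1 * σ d.toProd.1 d.toProd.2 * σ d.toProd.2 x).prod)
      = σ x u * σ x v * walkSign σ p := by
  intro u v p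
  induction p with
  | nil =>
    intro hadj
    have hu := hadj _ (Walk.start_mem_support _)
    rcases hσsign _ _ hu with h | h <;> simp [walkSign_nil, h]
  | @cons u m v h q ih =>
    intro hadj
    have hm : G.Adj x m := hadj m (by simp)
    have hsq : σ x m * σ x m = 1 := by rcases hσsign _ _ hm with h' | h' <;> simp [h']
    have := ih (fun y hy => hadj y (by simp [hy]))
    simp only [Walk.darts_cons, List.map_cons, List.prod_cons, this, walkSign_cons]
    rw [hσsymm m x]
    linear_combination (σ x u * σ u m * σ x v * walkSign σ q) * hsq

lemma exists_neg_triangle_cycle {x c1 c2 : V} (hx1 : G.Adj x c1) (h12 : G.Adj c1 c2)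
    (h2x : G.Adj c2 x) (hs : σ x c1 * σ c1 c2 * σ c2 x = -1) :
    ∃ (w : G.Walk x x), w.IsCycle ∧ walkSign σ w = -1 ∧ w.length = 3 := by
  refine ⟨Walk.cons hx1 (Walk.cons h12 (Walk.cons h2x Walk.nil)), ?_, ?_, rfl⟩
  · rw [Walk.cons_isCycle_iff]
    constructor
    · rw [Walk.isPath_def]
      simp [h12.ne, hx1.ne', h2x.ne]
    · intro hmem
      simp only [Walk.edges_cons, Walk.edges_nil, List.mem_cons, List.not_mem_nil, or_false,
        Sym2.eq_iff] at hmem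
      rcases hmem with (⟨ha, hb⟩ | ⟨ha, hb⟩) | (⟨ha, hb⟩ | ⟨ha, hb⟩)
      · exact hx1.ne ha
      · exact h2x.ne' ha
      · exact h2x.ne' ha
      · exact h12.ne hb
  · simp only [walkSign_cons, walkSign_nil, mul_one]
    rw [← mul_assoc]
    exact hs

lemma cycle3 {v : V} (w : G.Walk v v) (h3 : w.length = 3) :
    ∃ (b c : V), ∃ (h1 : G.Adj v b) (h2 : G.Adj b c) (h3' : G.Adj c v),
      w = Walk.cons h1 (Walk.cons h2 (Walk.cons h3' Walk.nil)) := by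
  cases w with
  | nil => simp at h3
  | cons h1 p =>
    cases p with
    | nil => simp at h3
    | cons h2 p2 =>
      cases p2 with
      | nil => simp at h3
      | cons h3' q =>
        cases q with
        | nil => exact ⟨_, _, h1, h2, h3', rfl⟩
        | cons h4 q' => simp [Walk.length_cons] at h3

lemma mem_tail_support_of_closed {v : V} (w : G.Walk v v) (hnn : ¬ w.Nil) {y : V}
    (hy : y ∈ w.support) : y ∈ w.support.tail := by
  cases w with
  | nil => simp at hnn
  | cons h q =>
    simp only [Walk.support_cons, List.tail_cons]
    rcases (by simpa using hy : y = v ∨ y ∈ q.support) with rfl | hy'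
    · exact q.end_mem_support
    · exact hy'

lemma edge_mem_of_length_one {u v : V} (p : G.Walk u v) (h : p.length = 1) :
    s(u, v) ∈ p.edges := by
  cases p with
  | nil => simp at h
  | cons h' p' =>
    have h0 : p'.length = 0 := by simpa using h
    have := Walk.eq_of_length_eq_zero h0
    subst this
    simp

lemma choose_bound : ∀ m : ℕ, 3 ≤ m → 2 * m ≤ m.choose 2 + 3 := by
  intro m hm
  induction m, hm using Nat.le_induction with
  | base => decide
  | succ m hm ih =>
    have h1 : (m + 1).choose 2 = m.choose 2 + m := by
      rw [Nat.choose_succ_succ]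
      simp [Nat.choose_one_right]
      omega
    omega

end SignedAux

/-- A `𝒦₄⁻`-free unbalanced signed graph of order `n ≥ 7` has at most
`n(n-1)/2 - (n-3)` edges. -/
theorem K4MinusFree_unbalanced_edge_bound (n : ℕ) (hn : 7 ≤ n)
    (G : SimpleGraph (Fin n)) [DecidableRel G.Adj] (σ : Fin n → Fin n → ℝ)
    (hσsymm : ∀ u v, σ u v = σ v u)
    (hσsign : ∀ u v, G.Adj u v → σ u v = 1 ∨ σ u v = -1)
    (hfree : K4MinusFree G σ) (hunbal : IsUnbalanced G σ) :
    (G.edgeFinset.card : ℝ) ≤ n * (n - 1) / 2 - (n - 3) := by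
  classical
  open SimpleGraph in
  obtain ⟨v0, w0, hc0, hs0⟩ := hunbal
  have hex : ∃ m, ∃ (v : Fin n) (w : G.Walk v v), w.IsCycle ∧ walkSign σ w = -1 ∧ w.length = m :=
    ⟨w0.length, v0, w0, hc0, hs0, rfl⟩
  obtain ⟨v, w, hc, hs, hlen⟩ := Nat.find_spec hex
  set k := Nat.find hex with hk
  have hmin : ∀ (v' : Fin n) (w' : G.Walk v' v'), w'.IsCycle → walkSign σ w' = -1 →
      k ≤ w'.length := fun v' w' h1 h2 => Nat.find_min' hex ⟨v', w', h1, h2, rfl⟩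
  have hk3 : 3 ≤ k := hlen ▸ hc.three_le_length
  set S : Finset (Fin n) := w.support.toFinset with hS
  have hmemS : ∀ y, y ∈ S ↔ y ∈ w.support := fun y => List.mem_toFinset
  have hScard : S.card = k := by
    have htf : w.support.toFinset = w.support.tail.toFinset := by
      conv_lhs => rw [w.support_eq_cons]
      rw [List.toFinset_cons, Finset.insert_eq_self]
      exact List.mem_toFinset.mpr
        (SignedAux.mem_tail_support_of_closed w hc.not_nil w.start_mem_support)
    rw [hS, htf, List.toFinset_card_of_nodup hc.support_nodup]
    have h1 := w.length_support
    have h2 : w.support.tail.length = w.support.length - 1 := by simp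
    omega
  have hkn : k ≤ n := by
    rw [← hScard]
    simpa using Finset.card_le_univ S
  -- every vertex outside S has a non-neighbor in S
  have hout : ∀ x, x ∉ S → ∃ y ∈ S, ¬ G.Adj x y := by
    intro x hx
    by_contra hcon
    push_neg at hcon
    have hadj : ∀ y ∈ w.support, G.Adj x y := fun y hy => hcon y ((hmemS y).mpr hy)
    rcases eq_or_lt_of_le hk3 with hk4 | hk4
    · obtain ⟨b, c, h1, h2, h3, hw⟩ := SignedAux.cycle3 w (by omega)
      have hxv : G.Adj x v := hadj v w.start_mem_support
      have hxb : G.Adj x b := hadj b (by rw [hw]; simp)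
      have hxc : G.Adj x c := hadj c (by rw [hw]; simp)
      obtain ⟨he, -, -, -⟩ := hfree v b c x h1 h3.symm hxv.symm h2 hxb.symm hxc.symm
      have hsign' : σ v b * σ b c * σ c v = -1 := by
        rw [hw] at hs
        simpa [SignedAux.walkSign_cons, walkSign, mul_assoc] using hs
      rw [he] at hsign'
      norm_num at hsign'
    · have hxv : G.Adj x v := hadj v w.start_mem_support
      have hprod := SignedAux.tri_prod σ hσsymm hσsign w hadj
      rw [hs] at hprod
      have hprodneg : (w.darts.map fun d =>
          σ x d.toProd.1 * σ d.toProd.1 d.toProd.2 * σ d.toProd.2 x).prod = -1 := by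
        rw [hprod]
        rcases hσsign _ _ hxv with h | h <;> rw [h] <;> ring
      have hunit : ∀ t ∈ (w.darts.map fun d =>
          σ x d.toProd.1 * σ d.toProd.1 d.toProd.2 * σ d.toProd.2 x), t = 1 ∨ t = -1 := by
        intro t ht
        obtain ⟨d, hd, rfl⟩ := List.mem_map.mp ht
        have ha := hadj _ (w.dart_fst_mem_support_of_mem_darts hd)
        have hb := hadj _ (w.dart_snd_mem_support_of_mem_darts hd)
        rcases hσsign _ _ ha with h1 | h1 <;> rcases hσsign _ _ d.adj with h2 | h2 <;>
          rcases hσsign _ _ hb.symm with h3 | h3 <;> rw [h1, h2, h3] <;> norm_num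
      obtain ⟨t, ht, ht1⟩ := SignedAux.neg_mem_of_prod_neg _ hunit hprodneg
      obtain ⟨d, hd, hdeq⟩ := List.mem_map.mp ht
      have ha := hadj _ (w.dart_fst_mem_support_of_mem_darts hd)
      have hb := hadj _ (w.dart_snd_mem_support_of_mem_darts hd)
      obtain ⟨w3, hc3, hs3, hl3⟩ := SignedAux.exists_neg_triangle_cycle σ ha d.adj hb.symm
        (by rw [← ht1]; exact hdeq)
      have hle := hmin x w3 hc3 hs3
      rw [hl3] at hle
      omega
  -- the cycle is chordless
  have hchord : ∀ x y, x ∈ w.support → y ∈ w.support → G.Adj x y → s(x, y) ∈ w.edges := by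
    intro x y hxs hys hxy
    by_contra hne
    have hc' : (w.rotate x hxs).IsCycle := hc.rotate hxs
    set w' := w.rotate x hxs with hw'
    have hedges' : ∀ e, e ∈ w'.edges ↔ e ∈ w.edges := fun e => (w.rotate_edges x hxs).perm.mem_iff
    have hsw' : walkSign σ w' = -1 := by
      have h1 := SignedAux.walkSign_append σ (w.takeUntil x hxs) (w.dropUntil x hxs)
      rw [w.take_spec hxs] at h1
      have h2 := SignedAux.walkSign_append σ (w.dropUntil x hxs) (w.takeUntil x hxs)
      rw [hw']
      simp only [SimpleGraph.Walk.rotate]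
      rw [h2, mul_comm, ← h1, hs]
    have hys' : y ∈ w'.support := by
      rcases eq_or_ne y x with rfl | hyx
      · exact w'.start_mem_support
      · have h1 : y ∈ w.support.tail := SignedAux.mem_tail_support_of_closed w hc.not_nil hys
        have h2 : y ∈ w'.support.tail := (w.support_rotate x hxs).perm.mem_iff.mpr h1
        exact List.mem_of_mem_tail h2
    set p := w'.takeUntil y hys' with hp'
    set q := w'.dropUntil y hys' with hq'
    have hpq : p.append q = w' := w'.take_spec hys'
    have hxyne : x ≠ y := hxy.ne
    have hplen0 : p.length ≠ 0 := fun h => hxyne (SimpleGraph.Walk.eq_of_length_eq_zero h)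
    have hqlen0 : q.length ≠ 0 := fun h => hxyne (SimpleGraph.Walk.eq_of_length_eq_zero h).symm
    have htail : p.support.tail ++ q.support.tail = w'.support.tail := by
      rw [← hpq, SimpleGraph.Walk.tail_support_append]
    have hnd : (p.support.tail ++ q.support.tail).Nodup := by
      rw [htail]; exact hc'.support_nodup
    rw [List.nodup_append] at hnd
    obtain ⟨hnd1, hnd2, hdisj⟩ := hnd
    have hyp : y ∈ p.support.tail := by
      have h1 := p.end_mem_support
      rw [SimpleGraph.Walk.support_eq_cons] at h1
      rcases List.mem_cons.mp h1 with h1 | h1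
      · exact absurd h1.symm hxyne
      · exact h1
    have hxq : x ∈ q.support.tail := by
      have h1 := q.end_mem_support
      rw [SimpleGraph.Walk.support_eq_cons] at h1
      rcases List.mem_cons.mp h1 with h1 | h1
      · exact absurd h1 hxyne
      · exact h1
    have hppath : p.IsPath := by
      rw [SimpleGraph.Walk.isPath_def, SimpleGraph.Walk.support_eq_cons, List.nodup_cons]
      exact ⟨fun hxp => hdisj x hxp x hxq rfl, hnd1⟩
    have hqpath : q.IsPath := by
      rw [SimpleGraph.Walk.isPath_def, SimpleGraph.Walk.support_eq_cons, List.nodup_cons]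
      exact ⟨fun hyq => hdisj y hyp y hyq rfl, hnd2⟩
    have hpe : ∀ e ∈ p.edges, e ∈ w.edges := by
      intro e he
      apply (hedges' e).mp
      rw [← hpq, SimpleGraph.Walk.edges_append]
      exact List.mem_append_left _ he
    have hqe : ∀ e ∈ q.edges, e ∈ w.edges := by
      intro e he
      apply (hedges' e).mp
      rw [← hpq, SimpleGraph.Walk.edges_append]
      exact List.mem_append_right _ he
    have hlenpq : p.length + q.length = k := by
      have h1 := congrArg SimpleGraph.Walk.length hpq
      rw [SimpleGraph.Walk.length_append] at h1
      have hwl : w'.length = w.length := by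
        have h2 := congrArg SimpleGraph.Walk.length (w.take_spec hxs)
        rw [SimpleGraph.Walk.length_append] at h2
        have h3 : w'.length = (w.dropUntil x hxs).length + (w.takeUntil x hxs).length := by
          rw [hw']
          simp only [SimpleGraph.Walk.rotate]
          rw [SimpleGraph.Walk.length_append]
        omega
      omega
    have hcyc1 : (SimpleGraph.Walk.cons hxy.symm p).IsCycle := by
      rw [SimpleGraph.Walk.cons_isCycle_iff]
      refine ⟨hppath, fun hmem => hne ?_⟩
      have h1 := hpe _ hmem
      rwa [Sym2.eq_swap] at h1
    have hcyc2 : (SimpleGraph.Walk.cons hxy q).IsCycle := by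
      rw [SimpleGraph.Walk.cons_isCycle_iff]
      exact ⟨hqpath, fun hmem => hne (hqe _ hmem)⟩
    have hsigns : walkSign σ (SimpleGraph.Walk.cons hxy.symm p) *
        walkSign σ (SimpleGraph.Walk.cons hxy q) = -1 := by
      rw [SignedAux.walkSign_cons, SignedAux.walkSign_cons]
      have h1 : walkSign σ p * walkSign σ q = -1 := by
        have h2 := SignedAux.walkSign_append σ p q
        rw [hpq, hsw'] at h2
        linarith
      have h2 : σ y x = σ x y := hσsymm y x
      rcases hσsign x y hxy with h3 | h3 <;> rw [h2, h3] <;> linear_combination h1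
    rcases SignedAux.walkSign_unit σ hσsign (SimpleGraph.Walk.cons hxy.symm p) with h1 | h1
    · have h2 : walkSign σ (SimpleGraph.Walk.cons hxy q) = -1 := by
        rw [h1, one_mul] at hsigns; exact hsigns
      have hle := hmin x _ hcyc2 h2
      rw [SimpleGraph.Walk.length_cons] at hle
      have hp1 : p.length = 1 := by omega
      exact hne (hpe _ (SignedAux.edge_mem_of_length_one p hp1))
    · have hle := hmin y _ hcyc1 h1
      rw [SimpleGraph.Walk.length_cons] at hle
      have hq1 : q.length = 1 := by omega
      have h2 := hqe _ (SignedAux.edge_mem_of_length_one q hq1)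
      rw [Sym2.eq_swap] at h2
      exact hne h2
  -- counting
  set NE := Gᶜ.edgeFinset with hNE
  set P : Sym2 (Fin n) → Prop := fun e => ∀ y ∈ e, y ∈ S with hP
  have hsplit : (NE.filter P).card + (NE.filter fun e => ¬ P e).card = NE.card :=
    Finset.card_filter_add_card_filter_not _
  -- choice of non-neighbor
  have hchoice : ∀ x : Fin n, ∃ y, x ∉ S → (y ∈ S ∧ ¬ G.Adj x y) := by
    intro x
    by_cases hx : x ∈ S
    · exact ⟨x, fun h => absurd hx h⟩
    · obtain ⟨y, hy1, hy2⟩ := hout x hx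
      exact ⟨y, fun _ => ⟨hy1, hy2⟩⟩
  choose f hf using hchoice
  have houtcard : n - k ≤ (NE.filter fun e => ¬ P e).card := by
    have hcard : (Finset.univ \ S).card = n - k := by
      rw [Finset.card_sdiff_of_subset (Finset.subset_univ S), hScard]
      simp
    rw [← hcard]
    apply Finset.card_le_card_of_injOn (fun x => s(x, f x))
    · intro x hx
      rw [Finset.mem_coe, Finset.mem_sdiff] at hx
      obtain ⟨-, hxS⟩ := hx
      obtain ⟨hfS, hfadj⟩ := hf x hxS
      rw [Finset.mem_coe, Finset.mem_filter]
      refine ⟨?_, fun hall => hxS (hall x (Sym2.mem_mk_left _ _))⟩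
      rw [hNE, SimpleGraph.mem_edgeFinset, SimpleGraph.mem_edgeSet, SimpleGraph.compl_adj]
      exact ⟨fun h => hxS (h ▸ hfS), hfadj⟩
    · intro a ha b hb hab
      rw [Finset.mem_coe, Finset.mem_sdiff] at ha hb
      rw [Sym2.eq_iff] at hab
      rcases hab with ⟨h1, -⟩ | ⟨h1, h2⟩
      · exact h1
      · exfalso
        apply ha.2
        rw [h1]
        exact (hf b hb.2).1
  -- inside S
  have hsub2 : S.sym2.filter (fun e => ¬ e.IsDiag) ⊆ NE.filter P ∪ w.edges.toFinset := by
    intro e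
    induction e using Sym2.ind with
    | _ a b =>
      intro he
      rw [Finset.mem_filter, Finset.mk_mem_sym2_iff] at he
      obtain ⟨⟨ha, hb⟩, hdiag⟩ := he
      rw [Sym2.mk_isDiag_iff] at hdiag
      by_cases hab : G.Adj a b
      · exact Finset.mem_union_right _ (List.mem_toFinset.mpr
          (hchord a b ((hmemS a).mp ha) ((hmemS b).mp hb) hab))
      · apply Finset.mem_union_left
        rw [Finset.mem_filter]
        constructor
        · rw [hNE, SimpleGraph.mem_edgeFinset, SimpleGraph.mem_edgeSet, SimpleGraph.compl_adj]
          exact ⟨hdiag, hab⟩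
        · intro y hy
          rcases Sym2.mem_iff.mp hy with rfl | rfl
          · exact ha
          · exact hb
  have hcard2 : (S.sym2.filter fun e => ¬ e.IsDiag).card ≤ (NE.filter P).card + k := by
    calc (S.sym2.filter fun e => ¬ e.IsDiag).card
        ≤ (NE.filter P ∪ w.edges.toFinset).card := Finset.card_le_card hsub2
      _ ≤ (NE.filter P).card + w.edges.toFinset.card := Finset.card_union_le _ _
      _ ≤ (NE.filter P).card + k := by
          have h1 : w.edges.toFinset.card ≤ w.edges.length := List.toFinset_card_le _
          have h2 := w.length_edges
          omega
  have hdiagim : S.sym2.filter (fun e => e.IsDiag) = S.image Sym2.diag := by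
    ext e
    induction e using Sym2.ind with
    | _ a b =>
      simp only [Finset.mem_filter, Finset.mk_mem_sym2_iff, Finset.mem_image]
      constructor
      · rintro ⟨⟨ha, hb⟩, hd⟩
        rw [Sym2.mk_isDiag_iff] at hd
        exact ⟨a, ha, by rw [← hd]; rfl⟩
      · rintro ⟨c, hc, hce⟩
        have hce' : s(c, c) = s(a, b) := hce
        rw [Sym2.eq_iff] at hce'
        rcases hce' with ⟨rfl, rfl⟩ | ⟨rfl, rfl⟩ <;>
          exact ⟨⟨hc, hc⟩, Sym2.mk_isDiag_iff.mpr rfl⟩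
  have hfiltercards :=
    Finset.card_filter_add_card_filter_not (s := S.sym2) (p := fun e => e.IsDiag)
  have hsym2card : S.sym2.card = (k + 1).choose 2 := by
    rw [Finset.card_sym2, hScard]
  have hdiagcard : (S.sym2.filter fun e => e.IsDiag).card = k := by
    rw [hdiagim, Finset.card_image_of_injective _ Sym2.diag_injective, hScard]
  have hchoosesucc : (k + 1).choose 2 = k.choose 2 + k := by
    rw [Nat.choose_succ_succ]
    simp [Nat.choose_one_right]
    omega
  have hnodiagcard : (S.sym2.filter fun e => ¬ e.IsDiag).card = k.choose 2 := by omega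
  have hckb := SignedAux.choose_bound k hk3
  have hNEcard : n - 3 ≤ NE.card := by omega
  -- total count
  have hdisjGN : Disjoint G.edgeFinset NE := by
    rw [Finset.disjoint_left]
    intro e heG heNE
    induction e using Sym2.ind with
    | _ a b =>
      rw [SimpleGraph.mem_edgeFinset, SimpleGraph.mem_edgeSet] at heG
      rw [hNE, SimpleGraph.mem_edgeFinset, SimpleGraph.mem_edgeSet, SimpleGraph.compl_adj] at heNE
      exact heNE.2 heG
  have hunion : G.edgeFinset ∪ NE = (⊤ : SimpleGraph (Fin n)).edgeFinset := by
    ext e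
    induction e using Sym2.ind with
    | _ a b =>
      simp only [Finset.mem_union, hNE, SimpleGraph.mem_edgeFinset, SimpleGraph.mem_edgeSet,
        SimpleGraph.compl_adj, SimpleGraph.top_adj]
      by_cases hab : G.Adj a b
      · simp [hab, hab.ne]
      · by_cases h : a = b <;> simp [h, hab]
  have htotal : G.edgeFinset.card + NE.card = n.choose 2 := by
    have h1 := Finset.card_union_of_disjoint hdisjGN
    rw [hunion] at h1
    rw [← h1, SimpleGraph.card_edgeFinset_top_eq_card_choose_two, Fintype.card_fin]
  have hEle : G.edgeFinset.card + (n - 3) ≤ n.choose 2 := by omega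
  have hcast : ((n.choose 2 : ℕ) : ℝ) = n * (n - 1) / 2 := Nat.cast_choose_two (K := ℝ) n
  have h3n : ((n - 3 : ℕ) : ℝ) = (n : ℝ) - 3 := by
    have h1 : (3 : ℕ) ≤ n := by omega
    push_cast [h1]
    ring
  have hR := (Nat.cast_le (α := ℝ)).mpr hEle
  push_cast [Nat.cast_add] at hR
  rw [h3n] at hR
  linarith [hcast, hR]
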